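/- arXiv:2504.19621 — 2 statements merged into one kernel-verified Lean document; each statement's English description precedes it below -/
import Mathlib

section
/- Let μ and ν be probability measures on a measurable space with μ absolutely continuous with respect to ν, and let T be a bounded measurable real-valued function. Then ∫ T dμ − log ∫ exp(T) dν ≤ KL(μ ‖ ν), where KL denotes the Kullback–Leibler divergence. (This is the one-sided Donsker–Varadhan bound underlying the MINE objective of Section 3.3 and Appendix C: for any neural network T_θ, the quantity 𝔼_{P_{XZ}}[T_θ] − log 𝔼_{P_X ⊗ P_Z}[e^{T_θ}] is a lower bound on the mutual information I(X;Z) = KL(P_{XZ} ‖ P_X ⊗ P_Z).) -/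
open MeasureTheory
open scoped Classical

/-- The Kullback–Leibler divergence `KL(μ ‖ ν)`, defined as `∫ log (dμ/dν) dμ` when `μ ≪ ν`
(and this log-likelihood ratio is integrable, so that the integral is meaningful),
and `+∞` otherwise, with values in the extended reals. -/
noncomputable def klDiv {α : Type*} [MeasurableSpace α] (μ ν : Measure α) : EReal :=
  if μ ≪ ν ∧ Integrable (llr μ ν) μ then ((∫ x, llr μ ν x ∂μ : ℝ) : EReal) else ⊤

lemma kl_integral_nonneg {α : Type*} [MeasurableSpace α] {μ ρ : Measure α}
    [IsProbabilityMeasure μ] [IsProbabilityMeasure ρ] (h : μ ≪ ρ)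
    (hint : Integrable (llr μ ρ) μ) : 0 ≤ ∫ x, llr μ ρ x ∂μ := by
  have h_int' : Integrable (llr ρ μ) μ :=
    (integrable_congr (neg_llr h)).mp hint.neg
  have h_rn_int : Integrable (fun x ↦ (ρ.rnDeriv μ x).toReal) μ :=
    Measure.integrable_toReal_rnDeriv
  have h_le : ∫ x, llr ρ μ x ∂μ ≤ ∫ x, ((ρ.rnDeriv μ x).toReal - 1) ∂μ := by
    refine integral_mono_ae h_int' (h_rn_int.sub (integrable_const 1)) ?_
    filter_upwards [Measure.rnDeriv_pos' h, Measure.rnDeriv_lt_top ρ μ] with x hx hx'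
    exact Real.log_le_sub_one_of_pos (ENNReal.toReal_pos hx.ne' hx'.ne)
  have h_int_le : ∫ x, (ρ.rnDeriv μ x).toReal ∂μ ≤ 1 := by
    have := Measure.setIntegral_toReal_rnDeriv_le (μ := ρ) (ν := μ)
      (s := Set.univ) (measure_ne_top ρ _)
    simpa using this
  have h2 : ∫ x, ((ρ.rnDeriv μ x).toReal - 1) ∂μ ≤ 0 := by
    rw [integral_sub h_rn_int (integrable_const 1)]
    simp only [integral_const, measure_univ, ENNReal.toReal_one, probReal_univ, smul_eq_mul, one_mul]
    linarith
  have h3 := integral_congr_ae (neg_llr h)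
  rw [integral_neg'] at h3
  linarith

theorem donsker_varadhan_lower_bound
    {α : Type*} [MeasurableSpace α] {μ ν : Measure α}
    [IsProbabilityMeasure μ] [IsProbabilityMeasure ν] (hμν : μ ≪ ν)
    {T : α → ℝ} (hTmeas : Measurable T) {C : ℝ} (hTbdd : ∀ x, |T x| ≤ C) :
    ((∫ x, T x ∂μ - Real.log (∫ x, Real.exp (T x) ∂ν) : ℝ) : EReal) ≤ klDiv μ ν := by
  by_cases h_int : Integrable (llr μ ν) μ
  · have hTμ : Integrable T μ :=
      (integrable_const C).mono' hTmeas.aestronglyMeasurable (ae_of_all _ hTbdd)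
    have hexpν : Integrable (fun x ↦ Real.exp (T x)) ν := by
      refine (integrable_const (Real.exp C)).mono'
        (hTmeas.exp).aestronglyMeasurable (ae_of_all _ fun x ↦ ?_)
      rw [Real.norm_eq_abs, abs_of_pos (Real.exp_pos _)]
      exact Real.exp_le_exp.mpr ((abs_le.mp (hTbdd x)).2)
    have hprob : IsProbabilityMeasure (ν.tilted T) := isProbabilityMeasure_tilted hexpν
    have hμν' : μ ≪ ν.tilted T := hμν.trans (absolutelyContinuous_tilted hexpν)
    have h_int' : Integrable (llr μ (ν.tilted T)) μ :=
      integrable_llr_tilted_right hμν hTμ h_int hexpν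
    have h_eq := integral_llr_tilted_right hμν hTμ hexpν h_int
    have h_nonneg := kl_integral_nonneg hμν' h_int'
    rw [h_eq] at h_nonneg
    rw [klDiv, if_pos ⟨hμν, h_int⟩, EReal.coe_le_coe_iff]
    linarith
  · rw [klDiv, if_neg (fun hc ↦ h_int hc.2)]
    exact le_top
end

section
/- Let μ and ν be probability measures on a standard Borel measurable space with μ absolutely continuous with respect to ν. Then KL(μ ‖ ν) = sup over bounded measurable real-valued functions T of ( ∫ T dμ − log ∫ exp(T) dν ). (Donsker–Varadhan dual representation of the KL-divergence, stated in Appendix C as the basis for Mutual Information Neural Estimation: the mutual information I(X;Z) = KL(P_{XZ} ‖ P_X ⊗ P_Z) is the supremum of the variational objective over test functions.) -/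
open MeasureTheory
open scoped Classical

namespace DVAux

open Real Filter
open scoped ENNReal Topology

variable {α : Type*} [MeasurableSpace α] {μ ν : Measure α}

lemma integrable_of_abs_le [IsFiniteMeasure μ] {f : α → ℝ} (hf : Measurable f)
    {C : ℝ} (h : ∀ x, |f x| ≤ C) : Integrable f μ :=
  (integrable_const C).mono' hf.aestronglyMeasurable
    (Filter.Eventually.of_forall fun x => by simpa [Real.norm_eq_abs] using h x)

lemma integrable_exp_neg_llr [IsProbabilityMeasure μ] [IsProbabilityMeasure ν]
    (hμν : μ ≪ ν) : Integrable (fun x ↦ exp (-llr μ ν x)) μ :=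
  (integrable_congr (exp_neg_llr hμν)).mpr Measure.integrable_toReal_rnDeriv

lemma integral_exp_neg_llr_le_one [IsProbabilityMeasure μ] [IsProbabilityMeasure ν]
    (hμν : μ ≪ ν) : ∫ x, exp (-llr μ ν x) ∂μ ≤ 1 := by
  rw [integral_congr_ae (exp_neg_llr hμν)]
  calc ∫ x, (ν.rnDeriv μ x).toReal ∂μ
      = ∫ x in Set.univ, (ν.rnDeriv μ x).toReal ∂μ := by rw [setIntegral_univ]
    _ ≤ (ν Set.univ).toReal := Measure.setIntegral_toReal_rnDeriv_le (measure_ne_top ν _)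
    _ = 1 := by simp

lemma integral_llr_nonneg [IsProbabilityMeasure μ] [IsProbabilityMeasure ν]
    (hμν : μ ≪ ν) (h_int : Integrable (llr μ ν) μ) : 0 ≤ ∫ x, llr μ ν x ∂μ := by
  have hexp : Integrable (fun x ↦ exp (-llr μ ν x)) μ := integrable_exp_neg_llr hμν
  have h1 : ∫ x, (1 - exp (-llr μ ν x)) ∂μ ≤ ∫ x, llr μ ν x ∂μ := by
    refine integral_mono ((integrable_const 1).sub hexp) h_int fun x => ?_
    have := Real.add_one_le_exp (-llr μ ν x)
    simp only [Pi.sub_apply]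
    linarith
  rw [integral_sub (integrable_const 1) hexp, integral_const] at h1
  simp only [measure_univ, probReal_univ, ENNReal.toReal_one, smul_eq_mul, one_mul] at h1
  linarith [integral_exp_neg_llr_le_one hμν]

lemma sup_term_le [IsProbabilityMeasure μ] [IsProbabilityMeasure ν]
    (hμν : μ ≪ ν) (h_int : Integrable (llr μ ν) μ) {T : α → ℝ} (hT : Measurable T)
    {C : ℝ} (hC : ∀ x, |T x| ≤ C) :
    ∫ x, T x ∂μ - Real.log (∫ x, Real.exp (T x) ∂ν) ≤ ∫ x, llr μ ν x ∂μ := by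
  have hTμ : Integrable T μ := integrable_of_abs_le hT hC
  have hexpν : Integrable (fun x ↦ exp (T x)) ν := by
    refine integrable_of_abs_le hT.exp (C := exp C) fun x => ?_
    rw [abs_of_pos (exp_pos _)]
    exact exp_le_exp.mpr ((abs_le.mp (hC x)).2)
  have hprob : IsProbabilityMeasure (ν.tilted T) := isProbabilityMeasure_tilted hexpν
  have hac : μ ≪ ν.tilted T := hμν.trans (absolutelyContinuous_tilted hexpν)
  have hint2 : Integrable (llr μ (ν.tilted T)) μ :=
    integrable_llr_tilted_right hμν hTμ h_int hexpν
  have h0 : 0 ≤ ∫ x, llr μ (ν.tilted T) x ∂μ := integral_llr_nonneg hac hint2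
  rw [integral_llr_tilted_right hμν hTμ hexpν h_int] at h0
  linarith

/-- The approximating sequence of bounded functions. -/
noncomputable def Tn (μ ν : Measure α) (n : ℕ) (x : α) : ℝ :=
  if (μ.rnDeriv ν x).toReal = 0 then -(n : ℝ) else max (-(n : ℝ)) (min (llr μ ν x) n)

lemma measurable_Tn (μ ν : Measure α) (n : ℕ) : Measurable (Tn μ ν n) := by
  refine Measurable.ite ?_ measurable_const
    (measurable_const.max ((measurable_llr μ ν).min measurable_const))
  exact (Measure.measurable_rnDeriv μ ν).ennreal_toReal (measurableSet_singleton 0)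

lemma abs_Tn_le (μ ν : Measure α) (n : ℕ) (x : α) : |Tn μ ν n x| ≤ n := by
  rw [Tn]
  split_ifs with h
  · rw [abs_neg, Nat.abs_cast]
  · rw [abs_le]
    constructor
    · exact le_max_left _ _
    · exact max_le (neg_le_self n.cast_nonneg) (min_le_right _ _)

lemma Tn_ae_eq [SigmaFinite μ] [SigmaFinite ν] (hμν : μ ≪ ν) (n : ℕ) :
    Tn μ ν n =ᵐ[μ] fun x => max (-(n : ℝ)) (min (llr μ ν x) n) := by
  filter_upwards [Measure.rnDeriv_pos hμν, hμν.ae_le (Measure.rnDeriv_lt_top μ ν)]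
    with x h1 h2
  rw [Tn, if_neg]
  simp [ENNReal.toReal_eq_zero_iff, h1.ne', h2.ne]

lemma exp_Tn_le (μ ν : Measure α) (n : ℕ) (x : α) :
    exp (Tn μ ν n x) ≤ exp (-(n : ℝ)) + (μ.rnDeriv ν x).toReal := by
  rw [Tn]
  split_ifs with h
  · exact le_add_of_nonneg_right ENNReal.toReal_nonneg
  · have hd : 0 < (μ.rnDeriv ν x).toReal :=
      lt_of_le_of_ne ENNReal.toReal_nonneg (Ne.symm h)
    rcases le_total (-(n : ℝ)) (min (llr μ ν x) n) with h' | h'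
    · rw [max_eq_right h']
      have : exp (min (llr μ ν x) n) ≤ exp (llr μ ν x) := exp_le_exp.mpr (min_le_left _ _)
      have hexp : exp (llr μ ν x) = (μ.rnDeriv ν x).toReal := exp_log hd
      rw [hexp] at this
      linarith [exp_pos (-(n : ℝ))]
    · rw [max_eq_left h']
      linarith

lemma min_le_exp_Tn (μ ν : Measure α) (n : ℕ) (x : α) :
    min ((μ.rnDeriv ν x).toReal) (exp n) ≤ exp (Tn μ ν n x) := by
  rw [Tn]
  split_ifs with h
  · rw [h]
    calc min 0 (exp (n : ℝ)) = 0 := min_eq_left (exp_pos _).le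
      _ ≤ exp (-(n : ℝ)) := (exp_pos _).le
  · have hd : 0 < (μ.rnDeriv ν x).toReal :=
      lt_of_le_of_ne ENNReal.toReal_nonneg (Ne.symm h)
    have h1 : min ((μ.rnDeriv ν x).toReal) (exp n) = exp (min (llr μ ν x) n) := by
      rw [Real.exp_monotone.map_min]
      congr 1
      exact (exp_log hd).symm
    rw [h1]
    exact exp_le_exp.mpr (le_max_right _ _)

variable [IsProbabilityMeasure μ] [IsProbabilityMeasure ν]

lemma integrable_exp_Tn (μ ν : Measure α) [IsProbabilityMeasure ν] (n : ℕ) :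
    Integrable (fun x => exp (Tn μ ν n x)) ν := by
  refine integrable_of_abs_le (measurable_Tn μ ν n).exp (C := exp n) fun x => ?_
  rw [abs_of_pos (exp_pos _)]
  exact exp_le_exp.mpr ((abs_le.mp (abs_Tn_le μ ν n x)).2)

lemma Zpos (μ ν : Measure α) [IsProbabilityMeasure ν] (n : ℕ) :
    0 < ∫ x, exp (Tn μ ν n x) ∂ν :=
  integral_exp_pos (integrable_exp_Tn μ ν n)

lemma Zle (hμν : μ ≪ ν) (n : ℕ) :
    ∫ x, exp (Tn μ ν n x) ∂ν ≤ exp (-(n : ℝ)) + 1 := by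
  have h1 : ∫ x, exp (Tn μ ν n x) ∂ν
      ≤ ∫ x, (exp (-(n : ℝ)) + (μ.rnDeriv ν x).toReal) ∂ν := by
    refine integral_mono (μ := ν) (integrable_exp_Tn μ ν n)
      ((integrable_const _).add (Measure.integrable_toReal_rnDeriv (μ := μ) (ν := ν)))
      (exp_Tn_le μ ν n)
  rw [integral_add (integrable_const _) (Measure.integrable_toReal_rnDeriv (μ := μ) (ν := ν)),
    integral_const, Measure.integral_toReal_rnDeriv hμν] at h1
  simpa using h1

lemma L_le_Z (μ ν : Measure α) [IsProbabilityMeasure μ] [IsProbabilityMeasure ν] (n : ℕ) :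
    ∫ x, min ((μ.rnDeriv ν x).toReal) (exp n) ∂ν ≤ ∫ x, exp (Tn μ ν n x) ∂ν := by
  refine integral_mono ?_ (integrable_exp_Tn μ ν n) (min_le_exp_Tn μ ν n)
  refine (Measure.integrable_toReal_rnDeriv (μ := μ) (ν := ν)).mono'
    (((Measure.measurable_rnDeriv μ ν).ennreal_toReal.min
      measurable_const).aestronglyMeasurable) ?_
  refine Filter.Eventually.of_forall fun x => ?_
  rw [Real.norm_eq_abs, abs_of_nonneg (le_min ENNReal.toReal_nonneg (exp_pos _).le)]
  exact min_le_left _ _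

lemma tendsto_L (hμν : μ ≪ ν) :
    Tendsto (fun n : ℕ => ∫ x, min ((μ.rnDeriv ν x).toReal) (exp n) ∂ν) atTop (𝓝 1) := by
  have h := tendsto_integral_of_dominated_convergence
    (F := fun (n : ℕ) x => min ((μ.rnDeriv ν x).toReal) (exp n))
    (f := fun x => (μ.rnDeriv ν x).toReal) (bound := fun x => (μ.rnDeriv ν x).toReal)
    (μ := ν)
    (fun n => ((Measure.measurable_rnDeriv μ ν).ennreal_toReal.min
      measurable_const).aestronglyMeasurable)
    Measure.integrable_toReal_rnDeriv
    (fun n => Filter.Eventually.of_forall fun x => by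
      rw [Real.norm_eq_abs, abs_of_nonneg (le_min ENNReal.toReal_nonneg (exp_pos _).le)]
      exact min_le_left _ _)
    (Filter.Eventually.of_forall fun x => ?_)
  · rw [Measure.integral_toReal_rnDeriv hμν] at h
    simpa using h
  · refine tendsto_const_nhds.congr' ?_
    rw [Filter.EventuallyEq, eventually_atTop]
    refine ⟨⌈(μ.rnDeriv ν x).toReal⌉₊, fun n hn => ?_⟩
    have h1 : (μ.rnDeriv ν x).toReal ≤ (n : ℝ) :=
      le_trans (Nat.le_ceil _) (Nat.cast_le.mpr hn)
    have h2 : (n : ℝ) ≤ exp n := by linarith [Real.add_one_le_exp (n : ℝ)]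
    exact (min_eq_left (h1.trans h2)).symm

lemma tendsto_logZ (hμν : μ ≪ ν) :
    Tendsto (fun n : ℕ => Real.log (∫ x, exp (Tn μ ν n x) ∂ν)) atTop (𝓝 0) := by
  have hL := tendsto_L hμν
  have hlog_lower : Tendsto (fun n : ℕ =>
      Real.log (∫ x, min ((μ.rnDeriv ν x).toReal) (exp n) ∂ν)) atTop (𝓝 0) := by
    have := ((Real.continuousAt_log one_ne_zero).tendsto).comp hL
    simpa [Function.comp_def] using this
  have hexp0 : Tendsto (fun n : ℕ => exp (-(n : ℝ))) atTop (𝓝 0) :=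
    Real.tendsto_exp_atBot.comp (tendsto_neg_atTop_atBot.comp tendsto_natCast_atTop_atTop)
  have hupper_lim : Tendsto (fun n : ℕ => Real.log (exp (-(n : ℝ)) + 1)) atTop (𝓝 0) := by
    have h1 : Tendsto (fun n : ℕ => exp (-(n : ℝ)) + 1) atTop (𝓝 1) := by
      simpa using hexp0.add tendsto_const_nhds
    have := ((Real.continuousAt_log one_ne_zero).tendsto).comp h1
    simpa [Function.comp_def] using this
  refine tendsto_of_tendsto_of_tendsto_of_le_of_le' hlog_lower hupper_lim ?_ ?_
  · filter_upwards [hL.eventually (eventually_gt_nhds (by norm_num : (0:ℝ) < 1))]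
      with n hn
    exact Real.log_le_log hn (L_le_Z μ ν n)
  · refine Filter.Eventually.of_forall fun n => ?_
    exact Real.log_le_log (Zpos μ ν n) (Zle hμν n)

lemma tendsto_intTn (hμν : μ ≪ ν) (h_int : Integrable (llr μ ν) μ) :
    Tendsto (fun n : ℕ => ∫ x, Tn μ ν n x ∂μ) atTop (𝓝 (∫ x, llr μ ν x ∂μ)) := by
  have heq : ∀ n : ℕ, ∫ x, Tn μ ν n x ∂μ
      = ∫ x, max (-(n : ℝ)) (min (llr μ ν x) n) ∂μ :=
    fun n => integral_congr_ae (Tn_ae_eq hμν n)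
  simp only [heq]
  refine tendsto_integral_of_dominated_convergence (fun x => |llr μ ν x|)
    (fun n => (measurable_const.max ((measurable_llr μ ν).min
      measurable_const)).aestronglyMeasurable)
    h_int.abs (fun n => Filter.Eventually.of_forall fun x => ?_)
    (Filter.Eventually.of_forall fun x => ?_)
  · rw [Real.norm_eq_abs, abs_le]
    constructor
    · refine le_trans (le_min (neg_abs_le _) ?_) (le_max_right _ _)
      exact le_trans (neg_nonpos.mpr (abs_nonneg _)) n.cast_nonneg
    · exact max_le ((neg_nonpos.mpr n.cast_nonneg).trans (abs_nonneg _))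
        ((min_le_left _ _).trans (le_abs_self _))
  · refine tendsto_const_nhds.congr' ?_
    rw [Filter.EventuallyEq, eventually_atTop]
    refine ⟨⌈|llr μ ν x|⌉₊, fun n hn => ?_⟩
    have h1 : |llr μ ν x| ≤ (n : ℝ) := le_trans (Nat.le_ceil _) (Nat.cast_le.mpr hn)
    rw [min_eq_left ((le_abs_self _).trans h1),
      max_eq_right (le_trans (neg_le_neg h1) (neg_abs_le _))]

lemma logZ_le_one (hμν : μ ≪ ν) (n : ℕ) :
    Real.log (∫ x, exp (Tn μ ν n x) ∂ν) ≤ 1 := by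
  have h1 : ∫ x, exp (Tn μ ν n x) ∂ν ≤ exp (-(n : ℝ)) + 1 := Zle hμν n
  have h2 : exp (-(n : ℝ)) ≤ 1 := by
    rw [exp_le_one_iff]
    simpa using n.cast_nonneg
  calc Real.log (∫ x, exp (Tn μ ν n x) ∂ν) ≤ Real.log 2 :=
        Real.log_le_log (Zpos μ ν n) (by linarith)
    _ ≤ 2 - 1 := Real.log_le_sub_one_of_pos (by norm_num)
    _ = 1 := by norm_num

/-- In the non-integrable case, the truncated integrals blow up. -/
lemma intTn_unbounded (hμν : μ ≪ ν) (h_int : ¬ Integrable (llr μ ν) μ) (M : ℝ) :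
    ∃ n : ℕ, M ≤ ∫ x, Tn μ ν n x ∂μ := by
  set l := llr μ ν with hl
  have hl_meas : Measurable l := measurable_llr μ ν
  -- the negative part is integrable
  have hmin_int : Integrable (fun x => min (l x) 0) μ := by
    refine (integrable_exp_neg_llr hμν).mono'
      ((hl_meas.min measurable_const).aestronglyMeasurable)
      (Filter.Eventually.of_forall fun x => ?_)
    rw [Real.norm_eq_abs]
    rcases le_total (l x) 0 with h | h
    · rw [abs_of_nonpos (min_le_of_left_le h)]
      have h1 : -(l x) ≤ exp (-(l x)) := by linarith [Real.add_one_le_exp (-(l x))]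
      rw [min_eq_left h]
      linarith
    · rw [min_eq_right h, abs_zero]
      exact (exp_pos _).le
  -- the positive part is not integrable
  have hpos_not_int : ¬ Integrable (fun x => max (l x) 0) μ := by
    intro hcon
    refine h_int ?_
    have : (fun x => max (l x) 0 + min (l x) 0) = l := by
      ext x; rw [max_add_min, add_zero]
    rw [← this]
    exact hcon.add hmin_int
  -- lintegral of the positive part is infinite
  have hlint_top : ∫⁻ x, ENNReal.ofReal (max (l x) 0) ∂μ = ∞ := by
    by_contra hne
    refine hpos_not_int ?_
    have := integrable_toReal_of_lintegral_ne_top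
      (hl_meas.max measurable_const).ennreal_ofReal.aemeasurable hne
    refine this.congr (Filter.Eventually.of_forall fun x => ?_)
    show (ENNReal.ofReal (max (l x) 0)).toReal = max (l x) 0
    rw [ENNReal.toReal_ofReal (le_max_right _ _)]
  -- monotone convergence for truncations
  have hsup : ⨆ n : ℕ, ∫⁻ x, ENNReal.ofReal (min (max (l x) 0) n) ∂μ = ∞ := by
    rw [← hlint_top, ← lintegral_iSup]
    · refine lintegral_congr fun x => ?_
      refine le_antisymm (iSup_le fun n => ENNReal.ofReal_le_ofReal (min_le_left _ _)) ?_
      refine le_iSup_of_le ⌈max (l x) 0⌉₊ (le_of_eq ?_)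
      rw [min_eq_left (Nat.le_ceil _)]
    · exact fun n => ((hl_meas.max measurable_const).min measurable_const).ennreal_ofReal
    · intro m n h x
      exact ENNReal.ofReal_le_ofReal (min_le_min le_rfl (Nat.cast_le.mpr h))
  -- pick n making the truncated lintegral large
  set M' := max (M - ∫ x, min (l x) 0 ∂μ) 0 with hM'
  obtain ⟨n, hn⟩ := iSup_eq_top.mp hsup (ENNReal.ofReal M') ENNReal.ofReal_lt_top
  refine ⟨n, ?_⟩
  have hfin : ∫⁻ x, ENNReal.ofReal (min (max (l x) 0) n) ∂μ ≠ ∞ := by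
    refine ne_of_lt (lt_of_le_of_lt (lintegral_mono fun x =>
      ENNReal.ofReal_le_ofReal (min_le_right _ _)) ?_)
    rw [lintegral_const, measure_univ, mul_one]
    exact ENNReal.ofReal_lt_top
  -- B n := ∫ min (max l 0) n
  have hBn : (M' : ℝ) ≤ ∫ x, min (max (l x) 0) (n : ℝ) ∂μ := by
    have heq : ∫ x, min (max (l x) 0) (n : ℝ) ∂μ
        = (∫⁻ x, ENNReal.ofReal (min (max (l x) 0) n) ∂μ).toReal :=
      integral_eq_lintegral_of_nonneg_ae (μ := μ)
        (f := fun x => min (max (l x) 0) (n : ℝ))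
        (Filter.Eventually.of_forall fun x => le_min (le_max_right _ _) n.cast_nonneg)
        ((hl_meas.max measurable_const).min measurable_const).aestronglyMeasurable
    rw [heq]
    calc M' = (ENNReal.ofReal M').toReal := by
          rw [ENNReal.toReal_ofReal (le_max_right _ _)]
      _ ≤ (∫⁻ x, ENNReal.ofReal (min (max (l x) 0) n) ∂μ).toReal := by
          refine ENNReal.toReal_le_toReal ENNReal.ofReal_ne_top hfin |>.mpr hn.le
  -- compare with ∫ Tn
  have hcomp : ∫ x, min (max (l x) 0) (n : ℝ) ∂μ + ∫ x, min (l x) 0 ∂μ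
      ≤ ∫ x, Tn μ ν n x ∂μ := by
    rw [integral_congr_ae (Tn_ae_eq hμν n), ← integral_add ?_ hmin_int]
    · refine integral_mono (?_) ?_ fun x => ?_
      · exact (integrable_of_abs_le ((hl_meas.max measurable_const).min measurable_const)
          (C := n) fun x => by
            rw [abs_of_nonneg (le_min (le_max_right _ _) n.cast_nonneg)]
            exact min_le_right _ _).add hmin_int
      · exact integrable_of_abs_le (measurable_const.max (hl_meas.min measurable_const))
          (C := n) fun x => by
            rw [abs_le]
            exact ⟨le_max_left _ _, max_le (neg_le_self n.cast_nonneg) (min_le_right _ _)⟩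
      · simp only [← hl]
        rcases le_or_gt 0 (l x) with h | h
        · have h1 : max (l x) 0 = l x := max_eq_left h
          have h2 : min (l x) 0 = 0 := min_eq_right h
          rw [h1, h2, add_zero]
          exact le_max_right _ _
        · have h1 : max (l x) 0 = 0 := max_eq_right h.le
          have h2 : min (l x) 0 = l x := min_eq_left h.le
          have h3 : min (0 : ℝ) (n : ℝ) = 0 := min_eq_left (Nat.cast_nonneg n)
          have h4 : min (l x) (n : ℝ) = l x := min_eq_left (h.le.trans (Nat.cast_nonneg n))
          rw [h1, h3, h2, h4, zero_add]
          exact le_max_right _ _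
    · exact integrable_of_abs_le ((hl_meas.max measurable_const).min measurable_const)
        (C := n) fun x => by
          rw [abs_of_nonneg (le_min (le_max_right _ _) n.cast_nonneg)]
          exact min_le_right _ _
  have hM : M ≤ M' + ∫ x, min (l x) 0 ∂μ := by
    have : M - ∫ x, min (l x) 0 ∂μ ≤ M' := le_max_left _ _
    linarith
  linarith [hBn, hcomp, hM]

end DVAux

open scoped Topology in
theorem donsker_varadhan_representation
    {α : Type*} [MeasurableSpace α] [StandardBorelSpace α] {μ ν : Measure α}
    [IsProbabilityMeasure μ] [IsProbabilityMeasure ν] (hμν : μ ≪ ν) :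
    klDiv μ ν
      = ⨆ (T : α → ℝ) (_ : Measurable T) (_ : ∃ C : ℝ, ∀ x, |T x| ≤ C),
          ((∫ x, T x ∂μ - Real.log (∫ x, Real.exp (T x) ∂ν) : ℝ) : EReal) := by
  have key : ∀ n : ℕ,
      ((∫ x, DVAux.Tn μ ν n x ∂μ
          - Real.log (∫ x, Real.exp (DVAux.Tn μ ν n x) ∂ν) : ℝ) : EReal)
        ≤ ⨆ (T : α → ℝ) (_ : Measurable T) (_ : ∃ C : ℝ, ∀ x, |T x| ≤ C),
            ((∫ x, T x ∂μ - Real.log (∫ x, Real.exp (T x) ∂ν) : ℝ) : EReal) := by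
    intro n
    refine le_iSup_of_le (DVAux.Tn μ ν n) ?_
    refine le_iSup_of_le (DVAux.measurable_Tn μ ν n) ?_
    exact le_iSup_of_le ⟨n, DVAux.abs_Tn_le μ ν n⟩ le_rfl
  refine le_antisymm ?_ ?_
  · by_cases h_int : Integrable (llr μ ν) μ
    · rw [klDiv, if_pos ⟨hμν, h_int⟩]
      have hval : Filter.Tendsto (fun n : ℕ =>
          ((∫ x, DVAux.Tn μ ν n x ∂μ
            - Real.log (∫ x, Real.exp (DVAux.Tn μ ν n x) ∂ν) : ℝ) : EReal))
          Filter.atTop (𝓝 ((∫ x, llr μ ν x ∂μ : ℝ) : EReal)) := by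
        have h1 := (DVAux.tendsto_intTn hμν h_int).sub (DVAux.tendsto_logZ hμν)
        rw [sub_zero] at h1
        exact (continuous_coe_real_ereal.tendsto _).comp h1
      exact le_of_tendsto hval (Filter.Eventually.of_forall key)
    · rw [klDiv, if_neg (fun h => h_int h.2), top_le_iff, EReal.eq_top_iff_forall_lt]
      intro y
      obtain ⟨n, hn⟩ := DVAux.intTn_unbounded hμν h_int (y + 2)
      refine lt_of_lt_of_le ?_ (key n)
      rw [EReal.coe_lt_coe_iff]
      have := DVAux.logZ_le_one hμν n
      linarith
  · refine iSup_le fun T => iSup_le fun hT => iSup_le fun hC => ?_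
    rw [klDiv]
    split_ifs with h
    · obtain ⟨C, hCb⟩ := hC
      exact EReal.coe_le_coe_iff.mpr (DVAux.sup_term_le hμν h.2 hT hCb)
    · exact le_top
end
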